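/- The Chlodowsky (p,q) Kantorovich–Stancu–Schurer operator relates to the Kantorovich (p,q)-Bernstein–Schurer operator T_{n,m} by the moment transfer formula: for every natural u, K_{n,m}^{(α,β)}(t^u; x, p, q) = ([n+1]_{p,q}^u b_n^u/([n+1]_{p,q} + β)^u) · ∑_{i=0}^u C(u,i) (α/[n+1]_{p,q})^{u−i} T_{n,m}(t^i; x/b_n, p, q), where C(u,i) is the ordinary binomial coefficient. -/

import Mathlib

noncomputable def pqInt (p q : ℝ) (n : ℕ) : ℝ := (p ^ n - q ^ n) / (p - q)

noncomputable def pqFac (p q : ℝ) (n : ℕ) : ℝ :=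
  ∏ j ∈ Finset.range n, pqInt p q (j + 1)

noncomputable def pqChoose (p q : ℝ) (n k : ℕ) : ℝ :=
  pqFac p q n / (pqFac p q k * pqFac p q (n - k))

/-- The (p,q)-integral of `g` on `[0,1]`. -/
noncomputable def pqIntegral (p q : ℝ) (g : ℝ → ℝ) : ℝ :=
  (p - q) * ∑' j : ℕ, (q ^ j / p ^ (j + 1)) * g (q ^ j / p ^ (j + 1))

/-- The Kantorovich type (p,q)-Bernstein–Schurer operator of Mursaleen–Khan. -/
noncomputable def Tpq (p q : ℝ) (n m : ℕ) (f : ℝ → ℝ) (y : ℝ) : ℝ :=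
  ∑ k ∈ Finset.range (n + m + 1),
    pqChoose p q (n + m) k * y ^ k *
      (∏ s ∈ Finset.range (n + m - k), (p ^ s - q ^ s * y)) *
      pqIntegral p q (fun t =>
        f (((1 - t) * pqInt p q k + pqInt p q (k + 1) * t) / pqInt p q (n + 1)))

/-- The Chlodowsky variant of the (p,q) Kantorovich–Stancu–Schurer operator. -/
noncomputable def Kop (p q : ℝ) (n m α β : ℕ) (bn : ℝ) (f : ℝ → ℝ) (x : ℝ) : ℝ :=
  ∑ k ∈ Finset.range (n + m + 1),
    pqChoose p q (n + m) k *
      (∏ s ∈ Finset.range (n + m - k), (p ^ s - q ^ s * (x / bn))) *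
      (x / bn) ^ k *
      pqIntegral p q (fun t =>
        f (((1 - t) * pqInt p q k + pqInt p q (k + 1) * t + (α : ℝ)) * bn /
            (pqInt p q (n + 1) + (β : ℝ))))

lemma key_summable (p q a b N : ℝ) (hq : 0 < q) (hqp : q < p) (i : ℕ) :
    Summable (fun j : ℕ => (q ^ j / p ^ (j + 1)) *
      (((1 - q ^ j / p ^ (j + 1)) * a + b * (q ^ j / p ^ (j + 1))) / N) ^ i) := by
  have hp : 0 < p := hq.trans hqp
  set B : ℝ := (|a| + (|a| + |b|) / p) / |N| with hB
  have hB0 : 0 ≤ B := by positivity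
  apply Summable.of_norm_bounded (g := fun j => (B ^ i / p) * (q / p) ^ j)
  · exact (summable_geometric_of_lt_one (by positivity)
      ((div_lt_one hp).mpr hqp)).mul_left _
  · intro j
    have htj0 : (0:ℝ) ≤ q ^ j / p ^ (j + 1) := by positivity
    have hqpj : q ^ j ≤ p ^ j := pow_le_pow_left₀ hq.le hqp.le j
    have htj1 : q ^ j / p ^ (j + 1) ≤ 1 / p := by
      rw [pow_succ, div_le_div_iff₀ (by positivity) hp]
      nlinarith [pow_pos hp j]
    have hteq : q ^ j / p ^ (j + 1) = (q / p) ^ j / p := by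
      rw [div_pow, pow_succ]
      ring
    set t := q ^ j / p ^ (j + 1) with ht
    have hXnum : |(1 - t) * a + b * t| ≤ |a| + (|a| + |b|) / p := by
      have e2 : |1 - t| ≤ 1 + t := by
        rw [abs_le]; constructor <;> linarith
      calc |(1 - t) * a + b * t| ≤ |(1 - t) * a| + |b * t| := abs_add_le _ _
        _ = |1 - t| * |a| + |b| * |t| := by rw [abs_mul, abs_mul]
        _ = |1 - t| * |a| + |b| * t := by rw [abs_of_nonneg htj0]
        _ ≤ (1 + t) * |a| + |b| * t :=
            add_le_add (mul_le_mul_of_nonneg_right e2 (abs_nonneg a)) le_rfl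
        _ = |a| + t * (|a| + |b|) := by ring
        _ ≤ |a| + (1 / p) * (|a| + |b|) :=
            add_le_add le_rfl (mul_le_mul_of_nonneg_right htj1 (by positivity))
        _ = |a| + (|a| + |b|) / p := by ring
    have hX : |((1 - t) * a + b * t) / N| ≤ B := by
      rw [abs_div, hB]
      rcases eq_or_ne N 0 with h | h
      · simp [h]
      · have hN0 : 0 < |N| := abs_pos.mpr h
        gcongr
    calc ‖t * (((1 - t) * a + b * t) / N) ^ i‖
        = t * |((1 - t) * a + b * t) / N| ^ i := by
          rw [Real.norm_eq_abs, abs_mul, abs_of_nonneg htj0, abs_pow]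
      _ ≤ t * B ^ i := by gcongr
      _ = B ^ i / p * (q / p) ^ j := by rw [hteq]; ring

lemma pw_binom (N c d A : ℝ) (hN : N ≠ 0) (u : ℕ) :
    ((A + d) * c) ^ u =
      N ^ u * c ^ u * ∑ i ∈ Finset.range (u + 1),
        (u.choose i : ℝ) * (d / N) ^ (u - i) * (A / N) ^ i := by
  rw [mul_pow, add_pow, Finset.mul_sum, Finset.sum_mul]
  refine Finset.sum_congr rfl fun i hi => ?_
  have hiu : i ≤ u := Nat.lt_succ_iff.mp (Finset.mem_range.mp hi)
  have key : (d / N) ^ (u - i) * (A / N) ^ i = d ^ (u - i) * A ^ i / N ^ u := by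
    rw [div_pow, div_pow, div_mul_div_comm, ← pow_add, Nat.sub_add_cancel hiu]
  rw [mul_assoc ((u.choose i : ℝ)) _ _, key]
  have hNu : N ^ u ≠ 0 := pow_ne_zero _ hN
  field_simp

lemma per_k (p q N a b c d : ℝ) (hq : 0 < q) (hqp : q < p) (hN : N ≠ 0) (u : ℕ) :
    (p - q) * ∑' j : ℕ, (q ^ j / p ^ (j + 1)) *
        (((1 - q ^ j / p ^ (j + 1)) * a + b * (q ^ j / p ^ (j + 1)) + d) * c) ^ u =
      N ^ u * c ^ u * ∑ i ∈ Finset.range (u + 1),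
        (u.choose i : ℝ) * (d / N) ^ (u - i) *
          ((p - q) * ∑' j : ℕ, (q ^ j / p ^ (j + 1)) *
            (((1 - q ^ j / p ^ (j + 1)) * a + b * (q ^ j / p ^ (j + 1))) / N) ^ i) := by
  have hs : ∀ i ∈ Finset.range (u + 1), Summable (fun j : ℕ =>
      N ^ u * c ^ u * ((u.choose i : ℝ) * (d / N) ^ (u - i) * ((p - q) *
        ((q ^ j / p ^ (j + 1)) *
          (((1 - q ^ j / p ^ (j + 1)) * a + b * (q ^ j / p ^ (j + 1))) / N) ^ i)))) :=
    fun i _ => (((key_summable p q a b N hq hqp i).mul_left _).mul_left _).mul_left _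
  rw [Finset.mul_sum]
  have step : ∀ i ∈ Finset.range (u + 1),
      N ^ u * c ^ u * ((u.choose i : ℝ) * (d / N) ^ (u - i) *
        ((p - q) * ∑' j : ℕ, (q ^ j / p ^ (j + 1)) *
          (((1 - q ^ j / p ^ (j + 1)) * a + b * (q ^ j / p ^ (j + 1))) / N) ^ i)) =
      ∑' j : ℕ, N ^ u * c ^ u * ((u.choose i : ℝ) * (d / N) ^ (u - i) * ((p - q) *
        ((q ^ j / p ^ (j + 1)) *
          (((1 - q ^ j / p ^ (j + 1)) * a + b * (q ^ j / p ^ (j + 1))) / N) ^ i))) := by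
    intro i _
    rw [tsum_mul_left, tsum_mul_left, tsum_mul_left]
  rw [Finset.sum_congr rfl step, ← Summable.tsum_finsetSum hs, ← tsum_mul_left]
  refine tsum_congr fun j => ?_
  rw [pw_binom N c d ((1 - q ^ j / p ^ (j + 1)) * a + b * (q ^ j / p ^ (j + 1))) hN u]
  simp only [Finset.mul_sum]
  refine Finset.sum_congr rfl fun i _ => by ring

theorem Kop_moment_transfer (p q : ℝ) (hq : 0 < q) (hqp : q < p) (hp : p ≤ 1)
    (n m α β : ℕ) (hn : 1 ≤ n) (hαβ : α ≤ β) (bn : ℝ) (hbn : 0 < bn)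
    (x : ℝ) (hx0 : 0 ≤ x) (hx1 : x ≤ bn) (u : ℕ) :
    Kop p q n m α β bn (fun t => t ^ u) x =
      (pqInt p q (n + 1)) ^ u * bn ^ u / (pqInt p q (n + 1) + (β : ℝ)) ^ u *
        ∑ i ∈ Finset.range (u + 1),
          (Nat.choose u i : ℝ) * ((α : ℝ) / pqInt p q (n + 1)) ^ (u - i) *
            Tpq p q n m (fun t => t ^ i) (x / bn) := by
  have hN : pqInt p q (n + 1) ≠ 0 := by
    have h1 : q ^ (n + 1) < p ^ (n + 1) :=
      pow_lt_pow_left₀ hqp hq.le (Nat.succ_ne_zero n)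
    have : 0 < pqInt p q (n + 1) :=
      div_pos (sub_pos.mpr h1) (sub_pos.mpr hqp)
    exact this.ne'
  simp only [Kop, Tpq, pqIntegral, mul_div_assoc, ← div_pow]
  rw [Finset.mul_sum]
  simp only [Finset.mul_sum]
  rw [Finset.sum_comm]
  refine Finset.sum_congr rfl fun k _ => ?_
  rw [per_k p q (pqInt p q (n + 1)) (pqInt p q k) (pqInt p q (k + 1))
    (bn / (pqInt p q (n + 1) + (β : ℝ))) (α : ℝ) hq hqp hN u]
  rw [Finset.mul_sum, Finset.mul_sum]
  refine Finset.sum_congr rfl fun i _ => by ring
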